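/- With notation as in the preceding context, for each r with 1/p ≤ r < 1 the norm ‖λ‖_r := sup_α |d_α| r^{τα} on the locally analytic distribution algebra D(G,K) (where λ = Σ_α d_α b^α is the Mahler-type expansion) is submultiplicative: ‖λμ‖_r ≤ ‖λ‖_r ‖μ‖_r. -/
import Mathlib

/-!
STATEMENT 14: With notation as for the distribution algebra `D(G,K)` of a compact
`p`-valued group `G` with ordered basis `(h 1, …, h d)`: every `λ ∈ D(G,K)` has a unique
expansion `λ = Σ_α d_α 𝐛^α` (modelled here by a coefficient map `coeff`), the structure
constants `c` satisfy `‖c_{βγ,α}‖ r^{τα} ≤ r^{τβ+τγ}`, and the expansion of a product is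
obtained by multiplying expansions.  Then for each `1/p ≤ r < 1` the norm
`‖λ‖_r = sup_α ‖d_α‖ r^{τα}` is submultiplicative: `‖λμ‖_r ≤ ‖λ‖_r ‖μ‖_r`.
-/

theorem statement14
    (p : ℕ) [Fact p.Prime] (G : Type) [Group G]
    (ω : G → ℝ)
    (hωrange : ∀ g : G, g ≠ 1 → 1 / ((p : ℝ) - 1) < ω g)
    (hωrat : ∀ g : G, g ≠ 1 → ∃ q : ℚ, ω g = (q : ℝ))
    (d : ℕ) (h : Fin d → G) (hne : ∀ i, h i ≠ 1)
    -- the coefficient field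
    (K : Type) [NontriviallyNormedField K] [CompleteSpace K] [IsUltrametricDist K]
    -- the distribution algebra `D = D(G,K)` with its Dirac distributions and
    -- coefficient (Mahler-type expansion) map
    (D : Type) [Ring D] [Algebra K D]
    (ι : G →* D)
    (coeff : D →ₗ[K] ((Fin d → ℕ) → K))
    (hinj : Function.Injective coeff)
    -- the expansion of the monomial `𝐛^α` is the `α`-th delta family
    (hmono : ∀ α : Fin d → ℕ,
      coeff ((List.ofFn fun i => (ι (h i) - 1) ^ α i).prod) =
        fun α' => if α' = α then 1 else 0)
    -- boundedness: `{‖d_α‖ r^{τα}}_α` is bounded for each `0 < r < 1`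
    (hbdd : ∀ (x : D) (r : ℝ), 0 < r → r < 1 →
      BddAbove (Set.range fun α : Fin d → ℕ =>
        ‖coeff x α‖ * r ^ (∑ i, (α i : ℝ) * ω (h i))))
    -- the structure constants and their estimate
    (c : (Fin d → ℕ) → (Fin d → ℕ) → (Fin d → ℕ) → K)
    (hc : ∀ (β γ α : Fin d → ℕ) (r : ℝ), 1 / (p : ℝ) ≤ r → r ≤ 1 →
      ‖c β γ α‖ * r ^ (∑ i, (α i : ℝ) * ω (h i)) ≤
        r ^ ((∑ i, (β i : ℝ) * ω (h i)) + ∑ i, (γ i : ℝ) * ω (h i)))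
    -- the expansion of a product is obtained by multiplying expansions and rearranging
    (hmul : ∀ (x y : D) (α : Fin d → ℕ),
      HasSum (fun βγ : (Fin d → ℕ) × (Fin d → ℕ) =>
        coeff x βγ.1 * coeff y βγ.2 * c βγ.1 βγ.2 α) (coeff (x * y) α))
    (r : ℝ) (hr₁ : 1 / (p : ℝ) ≤ r) (hr₂ : r < 1)
    (x y : D) :
    (⨆ α : Fin d → ℕ, ‖coeff (x * y) α‖ * r ^ (∑ i, (α i : ℝ) * ω (h i))) ≤
      (⨆ α : Fin d → ℕ, ‖coeff x α‖ * r ^ (∑ i, (α i : ℝ) * ω (h i))) *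
        (⨆ α : Fin d → ℕ, ‖coeff y α‖ * r ^ (∑ i, (α i : ℝ) * ω (h i))) := by
  have hp : (0 : ℝ) < p := by
    exact_mod_cast (Fact.out : p.Prime).pos
  have hr0 : 0 < r := lt_of_lt_of_le (by positivity) hr₁
  set τ : (Fin d → ℕ) → ℝ := fun α => ∑ i, (α i : ℝ) * ω (h i) with hτ
  set Nx : ℝ := ⨆ α : Fin d → ℕ, ‖coeff x α‖ * r ^ τ α with hNx
  set Ny : ℝ := ⨆ α : Fin d → ℕ, ‖coeff y α‖ * r ^ τ α with hNy
  have hbx := hbdd x r hr0 hr₂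
  have hby := hbdd y r hr0 hr₂
  have hlex : ∀ β, ‖coeff x β‖ * r ^ τ β ≤ Nx := fun β => le_ciSup hbx β
  have hley : ∀ γ, ‖coeff y γ‖ * r ^ τ γ ≤ Ny := fun γ => le_ciSup hby γ
  have hNx0 : 0 ≤ Nx := le_trans (by positivity) (hlex 0)
  have hNy0 : 0 ≤ Ny := le_trans (by positivity) (hley 0)
  apply ciSup_le
  intro α
  have hrα : (0 : ℝ) < r ^ τ α := Real.rpow_pos_of_pos hr0 _
  -- each term of the sum is bounded by Nx * Ny / r ^ τ α
  have hterm : ∀ βγ : (Fin d → ℕ) × (Fin d → ℕ),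
      ‖coeff x βγ.1 * coeff y βγ.2 * c βγ.1 βγ.2 α‖ ≤ Nx * Ny / r ^ τ α := by
    rintro ⟨β, γ⟩
    rw [le_div_iff₀ hrα, norm_mul, norm_mul]
    calc ‖coeff x β‖ * ‖coeff y γ‖ * ‖c β γ α‖ * r ^ τ α
        = ‖coeff x β‖ * ‖coeff y γ‖ * (‖c β γ α‖ * r ^ τ α) := by ring
      _ ≤ ‖coeff x β‖ * ‖coeff y γ‖ * r ^ (τ β + τ γ) := by
          apply mul_le_mul_of_nonneg_left (hc β γ α r hr₁ hr₂.le) (by positivity)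
      _ = (‖coeff x β‖ * r ^ τ β) * (‖coeff y γ‖ * r ^ τ γ) := by
          rw [Real.rpow_add hr0]; ring
      _ ≤ Nx * Ny := mul_le_mul (hlex β) (hley γ) (by positivity) hNx0
  have hC0 : 0 ≤ Nx * Ny / r ^ τ α := by positivity
  have hcoeff : ‖coeff (x * y) α‖ ≤ Nx * Ny / r ^ τ α := by
    rw [← (hmul x y α).tsum_eq]
    exact IsUltrametricDist.norm_tsum_le_of_forall_le_of_nonneg hC0 hterm
  calc ‖coeff (x * y) α‖ * r ^ τ α ≤ (Nx * Ny / r ^ τ α) * r ^ τ α :=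
        mul_le_mul_of_nonneg_right hcoeff hrα.le
    _ = Nx * Ny := div_mul_cancel₀ _ hrα.ne'
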